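/- Let M1 < M2 be coprime integers with M1 ≥ 2, let D_cp = {m M2 : 0 ≤ m ≤ 2M1−1} ∪ {m M1 : 1 ≤ m ≤ M2−1} be the co-prime array position set, and let k be an integer with 1 ≤ k ≤ M1−1. Then at the grating-lobe point Δ = 2k/M1, the array sum is exactly Σ_{d∈D_cp} exp(iπ d Δ) = M2 − 1; consequently the side lobe height is G(Δ; D_cp) = (M2−1)²/M² where M = 2M1 + M2 − 1. -/

import Mathlib

open Finset

/-- Co-prime array position set. -/
def Dcp (M1 M2 : ℕ) : Finset ℕ :=
  (Finset.range (2 * M1)).image (fun m => m * M2) ∪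
    (Finset.Icc 1 (M2 - 1)).image (fun m => m * M1)

/-- at the grating-lobe point `Δ = 2k/M1` with `1 ≤ k ≤ M1−1`, the
co-prime array sum equals `M2 − 1`; hence the side lobe height is
`(M2−1)²/M²` with `M = 2M1 + M2 − 1`. -/
theorem coprime_grating_lobe_subarray2 (M1 M2 : ℕ) (hM1 : 2 ≤ M1) (h12 : M1 < M2)
    (hc : Nat.Coprime M1 M2) (k : ℕ) (hk1 : 1 ≤ k) (hk2 : k ≤ M1 - 1) :
    (∑ d ∈ Dcp M1 M2,
        Complex.exp (Complex.I * Real.pi * (d : ℝ) * (2 * (k : ℝ) / (M1 : ℝ)))) =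
      ((M2 : ℂ) - 1) ∧
    (1 / (2 * (M1 : ℝ) + (M2 : ℝ) - 1) ^ 2) *
        (‖(∑ d ∈ Dcp M1 M2,
          Complex.exp (Complex.I * Real.pi * (d : ℝ) * (2 * (k : ℝ) / (M1 : ℝ))))‖) ^ 2 =
      ((M2 : ℝ) - 1) ^ 2 / (2 * (M1 : ℝ) + (M2 : ℝ) - 1) ^ 2 := by
  have hM1pos : 0 < M1 := by omega
  have hM2pos : 0 < M2 := by omega
  have hM1R : (M1 : ℝ) ≠ 0 := by positivity
  have hM1C : (M1 : ℂ) ≠ 0 := by exact_mod_cast (Nat.cast_ne_zero (R := ℂ)).2 hM1pos.ne'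
  have hkM1 : k < M1 := by omega
  -- disjointness
  have hdisj : Disjoint ((Finset.range (2 * M1)).image (fun m => m * M2))
      ((Finset.Icc 1 (M2 - 1)).image (fun m => m * M1)) := by
    rw [Finset.disjoint_left]
    rintro a ha hb
    obtain ⟨m, hm, rfl⟩ := Finset.mem_image.1 ha
    obtain ⟨n, hn, hmn⟩ := Finset.mem_image.1 hb
    simp only [Finset.mem_Icc] at hn
    have hdvd : M2 ∣ n * M1 := ⟨m, by rw [hmn]; ring⟩
    have : M2 ∣ n := (Nat.Coprime.dvd_of_dvd_mul_right hc.symm) hdvd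
    have := Nat.le_of_dvd (by omega) this
    omega
  have key : (∑ d ∈ Dcp M1 M2,
        Complex.exp (Complex.I * Real.pi * (d : ℝ) * (2 * (k : ℝ) / (M1 : ℝ)))) =
      ((M2 : ℂ) - 1) := by
    rw [Dcp, Finset.sum_union hdisj]
    have hsumB : (∑ d ∈ (Finset.Icc 1 (M2 - 1)).image (fun m => m * M1),
        Complex.exp (Complex.I * Real.pi * (d : ℝ) * (2 * (k : ℝ) / (M1 : ℝ)))) =
        ((M2 : ℂ) - 1) := by
      rw [Finset.sum_image (by intro x _ y _ h; exact Nat.eq_of_mul_eq_mul_right hM1pos h)]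
      have h1 : ∀ n ∈ Finset.Icc 1 (M2 - 1),
          Complex.exp (Complex.I * Real.pi * ((n * M1 : ℕ) : ℝ) * (2 * (k : ℝ) / (M1 : ℝ)))
            = 1 := by
        intro n _
        have harg : (Complex.I * Real.pi * ((n * M1 : ℕ) : ℝ) * (2 * (k : ℝ) / (M1 : ℝ)) : ℂ)
            = ((n * k : ℕ) : ℤ) * (2 * Real.pi * Complex.I) := by
          push_cast
          field_simp
        rw [harg, Complex.exp_int_mul_two_pi_mul_I]
      rw [Finset.sum_congr rfl h1, Finset.sum_const, Nat.card_Icc]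
      have : M2 - 1 + 1 - 1 = M2 - 1 := by omega
      rw [this]
      simp [Nat.cast_sub hM2pos]
    have hsumA : (∑ d ∈ (Finset.range (2 * M1)).image (fun m => m * M2),
        Complex.exp (Complex.I * Real.pi * (d : ℝ) * (2 * (k : ℝ) / (M1 : ℝ)))) = 0 := by
      rw [Finset.sum_image (by intro x _ y _ h; exact Nat.eq_of_mul_eq_mul_right hM2pos h)]
      set ζ : ℂ := Complex.exp (Complex.I * Real.pi * (M2 : ℝ) * (2 * (k : ℝ) / (M1 : ℝ)))
        with hζ
      have hterm : ∀ m ∈ Finset.range (2 * M1),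
          Complex.exp (Complex.I * Real.pi * ((m * M2 : ℕ) : ℝ) * (2 * (k : ℝ) / (M1 : ℝ)))
            = ζ ^ m := by
        intro m _
        rw [hζ, ← Complex.exp_nat_mul]
        congr 1
        push_cast
        ring
      rw [Finset.sum_congr rfl hterm]
      have hζne : ζ ≠ 1 := by
        intro h
        rw [hζ, Complex.exp_eq_one_iff] at h
        obtain ⟨n, hn⟩ := h
        have h3 : (M2 : ℂ) * k = (n : ℂ) * M1 := by
          have h2 : (2 * (Real.pi : ℂ) * Complex.I) ≠ 0 := by
            simp [Real.pi_ne_zero, Complex.I_ne_zero]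
          apply mul_left_cancel₀ h2
          field_simp at hn
          have hM1C' : ((M1 : ℝ) : ℂ) ≠ 0 := by exact_mod_cast hM1C
          rw [div_eq_iff hM1C'] at hn
          push_cast at hn
          linear_combination (2 * (Real.pi : ℂ) * Complex.I) * hn
        have h4 : (M2 : ℤ) * k = n * M1 := by exact_mod_cast h3
        have h5 : (M1 : ℤ) ∣ (M2 : ℤ) * k := ⟨n, by linarith⟩
        have h6 : M1 ∣ M2 * k := by exact_mod_cast h5
        have h7 : M1 ∣ k := (Nat.Coprime.dvd_of_dvd_mul_left hc) h6
        have := Nat.le_of_dvd (by omega) h7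
        omega
      have hζpow : ζ ^ (2 * M1) = 1 := by
        rw [hζ, ← Complex.exp_nat_mul]
        have harg : ((2 * M1 : ℕ) : ℂ) * (Complex.I * Real.pi * (M2 : ℝ) * (2 * (k : ℝ) / (M1 : ℝ)))
            = ((2 * M2 * k : ℕ) : ℤ) * (2 * Real.pi * Complex.I) := by
          push_cast
          field_simp
        rw [harg, Complex.exp_int_mul_two_pi_mul_I]
      rw [geom_sum_eq hζne, hζpow]
      simp
    rw [hsumA, hsumB, zero_add]
  refine ⟨key, ?_⟩
  rw [key]
  have habs : ‖((M2 : ℂ) - 1)‖ = (M2 : ℝ) - 1 := by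
    have h1 : ((M2 : ℂ) - 1) = (((M2 : ℝ) - 1 : ℝ) : ℂ) := by push_cast; ring
    rw [h1, Complex.norm_real, Real.norm_eq_abs, abs_of_nonneg]
    have : (1:ℝ) ≤ (M2:ℝ) := by exact_mod_cast hM2pos
    linarith
  rw [habs]
  ring
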